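/- Let G be a weighted graph, let S be a k-way split of G, and let a_1, a_2, …, a_l be positive integers with a_1 + a_2 + ⋯ + a_l < k. For each i = 1, …, l let G_i = G − (C_1 ∪ ⋯ ∪ C_{i−1}), let C_i be a minimum (a_i + 1)-way split of G_i, and suppose S_i = S ∖ (C_1 ∪ ⋯ ∪ C_{i−1}) is a b_i-way split of G_i. Let δ ≥ 0 and suppose that for every i, w(C_i)/a_i ≤ (1+δ)·w(S_i)/b_i, and that C_i is a sparse split of G_i for every i < l. Then the union C_1 ∪ ⋯ ∪ C_l is a (1 + a_1 + ⋯ + a_l)-way split of G whose density satisfies dens_G(C_1 ∪ ⋯ ∪ C_l) ≤ (1+δ)·w(S)/k. -/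

import Mathlib

open Finset

namespace KCut

open scoped Classical

/-- Number of connected components of a graph. -/
noncomputable def numComp {V : Type*} (G : SimpleGraph V) : ℕ :=
  Nat.card G.ConnectedComponent

/-- `S` is an `h`-way split of `G`: a set of edges of `G` whose removal increases the
number of connected components by `h - 1`. -/
def IsSplit {V : Type*} (G : SimpleGraph V) (S : Finset (Sym2 V)) (h : ℕ) : Prop :=
  ↑S ⊆ G.edgeSet ∧ numComp (G.deleteEdges ↑S) = (h - 1) + numComp G

/-- Total weight of a finite set of edges. -/
noncomputable def weight {V : Type*} (w : Sym2 V → ℝ) (S : Finset (Sym2 V)) : ℝ :=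
  ∑ e ∈ S, w e

/-- Density of an `h`-way split: its weight divided by `h - 1`. -/
noncomputable def density {V : Type*} (w : Sym2 V → ℝ) (S : Finset (Sym2 V)) (h : ℕ) : ℝ :=
  weight w S / ((h : ℝ) - 1)

/-- `β(G) = |E|/|V|`. -/
noncomputable def beta {V : Type*} [Fintype V] (G : SimpleGraph V) [Fintype G.edgeSet] : ℝ :=
  (G.edgeFinset.card : ℝ) / (Fintype.card V : ℝ)

/-- A matching: a set of pairwise vertex-disjoint edges of `G`. -/
def IsMatchingSet {V : Type*} (G : SimpleGraph V) (M : Finset (Sym2 V)) : Prop :=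
  ↑M ⊆ G.edgeSet ∧ ∀ e ∈ M, ∀ f ∈ M, e ≠ f → ∀ v : V, v ∈ e → v ∉ f

/-- A minimum `h`-way split: an `h`-way split of minimum total weight. -/
def IsMinSplit {V : Type*} (G : SimpleGraph V) (w : Sym2 V → ℝ)
    (S : Finset (Sym2 V)) (h : ℕ) : Prop :=
  IsSplit G S h ∧ ∀ T : Finset (Sym2 V), IsSplit G T h → weight w S ≤ weight w T

/-- An `h`-way split `S` is sparse if no split of separation degree at most `h`
has smaller density. -/
def IsSparse {V : Type*} (G : SimpleGraph V) (w : Sym2 V → ℝ)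
    (S : Finset (Sym2 V)) (h : ℕ) : Prop :=
  ∀ h' : ℕ, h' ≤ h → 2 ≤ h' → ∀ S' : Finset (Sym2 V), IsSplit G S' h' →
    density w S h ≤ density w S' h'
/-- The union of the splits `C j` for `j < i`. -/
def prevUnion {V : Type*} [DecidableEq V] {l : ℕ}
    (C : Fin l → Finset (Sym2 V)) (i : Fin l) : Finset (Sym2 V) :=
  (Finset.univ.filter (fun j => j < i)).biUnion C

section GraphLemmas

open SimpleGraph

variable {V : Type*}

lemma finite_cc [Finite V] (G : SimpleGraph V) : Finite G.ConnectedComponent :=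
  Finite.of_surjective G.connectedComponentMk (fun c => c.exists_rep)

lemma numComp_le_of_le [Finite V] {G H : SimpleGraph V} (h : H ≤ G) :
    numComp G ≤ numComp H := by
  haveI := finite_cc H
  exact Nat.card_le_card_of_surjective
    (SimpleGraph.ConnectedComponent.map (SimpleGraph.Hom.ofLE h))
    (fun c => c.ind (fun v => ⟨H.connectedComponentMk v, rfl⟩))

lemma reachable_cases (G : SimpleGraph V) (x y : V) {a b : V} (p : G.Walk a b) :
    (G.deleteEdges {s(x,y)}).Reachable a b ∨
      ((G.deleteEdges {s(x,y)}).Reachable a x ∧ (G.deleteEdges {s(x,y)}).Reachable b y) ∨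
      ((G.deleteEdges {s(x,y)}).Reachable a y ∧ (G.deleteEdges {s(x,y)}).Reachable b x) := by
  induction p with
  | nil => exact Or.inl (Reachable.refl _)
  | @cons u v' w h p ih =>
    by_cases he : s(u,v') = s(x,y)
    · rw [Sym2.eq_iff] at he
      rcases he with ⟨hux, hvy⟩ | ⟨huy, hvx⟩
      · subst hux; subst hvy
        rcases ih with h1 | ⟨h2a, h2b⟩ | ⟨h3a, h3b⟩
        · exact Or.inr (Or.inl ⟨Reachable.refl _, h1.symm⟩)
        · exact Or.inr (Or.inl ⟨Reachable.refl _, h2b⟩)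
        · exact Or.inl h3b.symm
      · subst huy; subst hvx
        rcases ih with h1 | ⟨h2a, h2b⟩ | ⟨h3a, h3b⟩
        · exact Or.inr (Or.inr ⟨Reachable.refl _, h1.symm⟩)
        · exact Or.inl h2b.symm
        · exact Or.inr (Or.inr ⟨Reachable.refl _, h3b⟩)
    · have hadj' : (G.deleteEdges {s(x,y)}).Adj u v' := by
        rw [SimpleGraph.deleteEdges_adj]
        exact ⟨h, by simpa using he⟩
      have hr := hadj'.reachable
      rcases ih with h1 | ⟨h2a, h2b⟩ | ⟨h3a, h3b⟩
      · exact Or.inl (hr.trans h1)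
      · exact Or.inr (Or.inl ⟨hr.trans h2a, h2b⟩)
      · exact Or.inr (Or.inr ⟨hr.trans h3a, h3b⟩)

lemma numComp_deleteEdge_of_reachable {G : SimpleGraph V} {x y : V}
    (h : (G.deleteEdges {s(x,y)}).Reachable x y) :
    numComp (G.deleteEdges {s(x,y)}) = numComp G := by
  have key : ∀ a b : V, (G.deleteEdges {s(x,y)}).Reachable a b ↔ G.Reachable a b := by
    intro a b
    constructor
    · exact fun hr => hr.mono (SimpleGraph.deleteEdges_le _)
    · rintro ⟨p⟩
      rcases reachable_cases G x y p with h1 | ⟨h2a, h2b⟩ | ⟨h3a, h3b⟩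
      · exact h1
      · exact (h2a.trans h).trans h2b.symm
      · exact (h3a.trans h.symm).trans h3b.symm
  exact Nat.card_congr (Quot.congrRight key)

lemma numComp_deleteEdge_of_not_reachable [Finite V] {G : SimpleGraph V} {x y : V}
    (hadj : G.Adj x y) (hn : ¬ (G.deleteEdges {s(x,y)}).Reachable x y) :
    numComp (G.deleteEdges {s(x,y)}) = numComp G + 1 := by
  haveI := finite_cc G
  set K := G.deleteEdges {s(x,y)} with hK
  have hKle : K ≤ G := SimpleGraph.deleteEdges_le _
  have casesR : ∀ {a b : V}, G.Reachable a b →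
      K.Reachable a b ∨ (K.Reachable a x ∧ K.Reachable b y) ∨
      (K.Reachable a y ∧ K.Reachable b x) := by
    rintro a b ⟨p⟩; exact reachable_cases G x y p
  let f : K.ConnectedComponent → Option G.ConnectedComponent :=
    SimpleGraph.ConnectedComponent.lift
      (fun w => if K.Reachable w y then none else some (G.connectedComponentMk w))
      (by
        intro w w' p _
        have hr : K.Reachable w w' := ⟨p⟩
        by_cases h1 : K.Reachable w y
        · rw [if_pos h1, if_pos (hr.symm.trans h1)]
        · rw [if_neg h1, if_neg (fun h2 => h1 (hr.trans h2))]
          exact congrArg some (SimpleGraph.ConnectedComponent.sound (hr.mono hKle)))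
  let gs : G.ConnectedComponent → K.ConnectedComponent :=
    SimpleGraph.ConnectedComponent.lift
      (fun w => if K.Reachable w y then K.connectedComponentMk x else K.connectedComponentMk w)
      (by
        intro w w' p _
        have hr : G.Reachable w w' := ⟨p⟩
        rcases casesR hr with h1 | ⟨h2a, h2b⟩ | ⟨h3a, h3b⟩
        · by_cases hv : K.Reachable w y
          · rw [if_pos hv, if_pos (h1.symm.trans hv)]
          · rw [if_neg hv, if_neg (fun h2 => hv (h1.trans h2))]
            exact SimpleGraph.ConnectedComponent.sound h1
        · rw [if_pos h2b]
          by_cases hv : K.Reachable w y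
          · rw [if_pos hv]
          · rw [if_neg hv]
            exact SimpleGraph.ConnectedComponent.sound h2a
        · rw [if_pos h3a]
          by_cases hv : K.Reachable w' y
          · rw [if_pos hv]
          · rw [if_neg hv]
            exact (SimpleGraph.ConnectedComponent.sound h3b).symm)
  let g : Option G.ConnectedComponent → K.ConnectedComponent := fun o =>
    match o with
    | none => K.connectedComponentMk y
    | some c => gs c
  have e : K.ConnectedComponent ≃ Option G.ConnectedComponent := by
    refine ⟨f, g, ?_, ?_⟩
    · refine SimpleGraph.ConnectedComponent.ind (fun w => ?_)
      show g (f (K.connectedComponentMk w)) = K.connectedComponentMk w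
      by_cases h1 : K.Reachable w y
      · have : f (K.connectedComponentMk w) = none := by
          simp only [f, SimpleGraph.ConnectedComponent.lift_mk, if_pos h1]
        rw [this]
        exact SimpleGraph.ConnectedComponent.sound h1.symm
      · have : f (K.connectedComponentMk w) = some (G.connectedComponentMk w) := by
          simp only [f, SimpleGraph.ConnectedComponent.lift_mk, if_neg h1]
        rw [this]
        show gs (G.connectedComponentMk w) = _
        simp only [gs, SimpleGraph.ConnectedComponent.lift_mk, if_neg h1]
    · intro o
      match o with
      | none =>
        show f (K.connectedComponentMk y) = none
        simp only [f, SimpleGraph.ConnectedComponent.lift_mk, if_pos (Reachable.refl y)]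
      | some c =>
        refine SimpleGraph.ConnectedComponent.ind (fun w => ?_) c
        show f (g (some (G.connectedComponentMk w))) = some (G.connectedComponentMk w)
        show f (gs (G.connectedComponentMk w)) = some (G.connectedComponentMk w)
        by_cases h1 : K.Reachable w y
        · have : gs (G.connectedComponentMk w) = K.connectedComponentMk x := by
            simp only [gs, SimpleGraph.ConnectedComponent.lift_mk, if_pos h1]
          rw [this]
          have : f (K.connectedComponentMk x) = some (G.connectedComponentMk x) := by
            simp only [f, SimpleGraph.ConnectedComponent.lift_mk, if_neg hn]
          rw [this]
          exact congrArg some (SimpleGraph.ConnectedComponent.sound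
            (hadj.reachable.trans (h1.mono hKle).symm))
        · have : gs (G.connectedComponentMk w) = K.connectedComponentMk w := by
            simp only [gs, SimpleGraph.ConnectedComponent.lift_mk, if_neg h1]
          rw [this]
          simp only [f, SimpleGraph.ConnectedComponent.lift_mk, if_neg h1]
  show Nat.card K.ConnectedComponent = Nat.card G.ConnectedComponent + 1
  rw [Nat.card_congr e, Finite.card_option]

lemma numComp_deleteEdge_swap [Finite V] {H G : SimpleGraph V} (hle : H ≤ G)
    {e : Sym2 V} (he : e ∈ H.edgeSet) :
    numComp (G.deleteEdges {e}) + numComp H ≤ numComp (H.deleteEdges {e}) + numComp G := by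
  induction e using Sym2.ind with
  | _ x y =>
    have hadjH : H.Adj x y := (SimpleGraph.mem_edgeSet H).1 he
    have hadjG : G.Adj x y := hle hadjH
    by_cases hr : (G.deleteEdges {s(x,y)}).Reachable x y
    · rw [numComp_deleteEdge_of_reachable hr]
      have h2 := numComp_le_of_le
        (SimpleGraph.deleteEdges_le ({s(x,y)} : Set (Sym2 V)) : H.deleteEdges _ ≤ H)
      omega
    · have hrH : ¬ (H.deleteEdges {s(x,y)}).Reachable x y :=
        fun hh => hr (hh.mono (SimpleGraph.deleteEdges_mono hle))
      rw [numComp_deleteEdge_of_not_reachable hadjG hr,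
        numComp_deleteEdge_of_not_reachable hadjH hrH]
      omega

lemma numComp_deleteEdges_swap [Finite V] {H G : SimpleGraph V} (hle : H ≤ G)
    (F : Finset (Sym2 V)) (hF : ↑F ⊆ H.edgeSet) :
    numComp (G.deleteEdges ↑F) + numComp H ≤ numComp (H.deleteEdges ↑F) + numComp G := by
  induction F using Finset.induction with
  | empty => simp [Nat.add_comm]
  | @insert e F heF ih =>
    have hF' : ↑F ⊆ H.edgeSet := by
      intro x hx
      exact hF (by simp only [Finset.coe_insert, Set.mem_insert_iff]; exact Or.inr hx)
    have heH : e ∈ H.edgeSet := hF (by simp)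
    have hle' : H.deleteEdges ↑F ≤ G.deleteEdges ↑F := SimpleGraph.deleteEdges_mono hle
    have he' : e ∈ (H.deleteEdges ↑F).edgeSet := by
      rw [SimpleGraph.edgeSet_deleteEdges]
      exact ⟨heH, by simpa using heF⟩
    have key := numComp_deleteEdge_swap hle' he'
    have ihh := ih hF'
    have hGe : (G.deleteEdges (↑F : Set (Sym2 V))).deleteEdges {e}
        = G.deleteEdges ↑(insert e F) := by
      rw [SimpleGraph.deleteEdges_deleteEdges, Finset.coe_insert, Set.union_singleton]
    have hHe : (H.deleteEdges (↑F : Set (Sym2 V))).deleteEdges {e}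
        = H.deleteEdges ↑(insert e F) := by
      rw [SimpleGraph.deleteEdges_deleteEdges, Finset.coe_insert, Set.union_singleton]
    rw [hGe, hHe] at key
    omega

end GraphLemmas

lemma key_ineq (D α m K γ r W X0 Xr : ℝ)
    (hD : 1 ≤ D) (hα : 1 ≤ α) (hm : 1 ≤ m) (hγ : 0 ≤ γ) (hK : α + m + 1 ≤ K)
    (hr : 0 ≤ r) (hWr : r ≤ W)
    (hX0a : X0 ≤ D * W / K * α)
    (hX0b : K * r < (α - γ) * W → X0 * (α - γ) ≤ α * r)
    (hXr : Xr ≤ D * m * (W - r) / (K - α + γ)) :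
    X0 + Xr ≤ D * (α + m) * W / K := by
  have hKpos : (0:ℝ) < K := by linarith
  have hK' : (0:ℝ) < K - α + γ := by linarith
  have hW0 : (0:ℝ) ≤ W := le_trans hr hWr
  by_cases hc : K * r < (α - γ) * W
  · have hag : (0:ℝ) < α - γ := by
      by_contra hcon
      push_neg at hcon
      nlinarith
    have h1 : X0 ≤ α * r / (α - γ) := by
      rw [le_div_iff₀ hag]
      exact hX0b hc
    have h3 : α * r / (α - γ) + D * m * (W - r) / (K - α + γ) ≤ D * (α + m) * W / K := by
      rw [div_add_div _ _ (ne_of_gt hag) (ne_of_gt hK'), div_le_div_iff₀ (by positivity) hKpos]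
      have hrK : r * K ≤ (α - γ) * W := by nlinarith
      rcases le_or_gt (α * (K - α + γ)) (D * m * (α - γ)) with hs | hs
      · have t1 : 0 ≤ (r * K) * (D * m * (α - γ) - α * (K - α + γ)) :=
          mul_nonneg (mul_nonneg hr hKpos.le) (by linarith)
        have t2 : 0 ≤ (D * W * (α - γ)) * ((α + m) * (K - α + γ) - m * K) := by
          apply mul_nonneg
          · positivity
          · nlinarith
        nlinarith [t1, t2]
      · have t1 : 0 ≤ ((α - γ) * W - r * K) * (α * (K - α + γ) - D * m * (α - γ)) :=
          mul_nonneg (by linarith) (by linarith)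
        have t2 : 0 ≤ (D * W * (α - γ)) * ((α + m) * (K - α + γ) - m * K) := by
          apply mul_nonneg
          · positivity
          · nlinarith
        have t3 : 0 ≤ (α - γ) * W * (K - α + γ) * α * (D - 1) := by
          apply mul_nonneg
          apply mul_nonneg
          apply mul_nonneg
          · positivity
          · linarith
          · linarith
          · linarith
        nlinarith [t1, t2, t3]
    linarith
  · push_neg at hc
    have h4 : (W - r) / (K - α + γ) ≤ W / K := by
      rw [div_le_div_iff₀ hK' hKpos]
      nlinarith
    have h5 : Xr ≤ D * m * (W / K) := by
      calc Xr ≤ D * m * (W - r) / (K - α + γ) := hXr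
        _ = (D * m) * ((W - r) / (K - α + γ)) := by ring
        _ ≤ (D * m) * (W / K) := by
            apply mul_le_mul_of_nonneg_left h4
            positivity
        _ = D * m * (W / K) := by ring
    calc X0 + Xr ≤ D * W / K * α + D * m * (W / K) := by linarith
      _ = D * (α + m) * W / K := by ring

section PrevUnion

variable {V : Type*} [DecidableEq V]

lemma prevUnion_zero {n : ℕ} (C : Fin (n+1) → Finset (Sym2 V)) :
    prevUnion C 0 = ∅ := by
  simp [prevUnion, Finset.filter_eq_empty_iff]

lemma prevUnion_succ_eq {n : ℕ} (C : Fin (n+2) → Finset (Sym2 V)) (i : Fin (n+1)) :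
    C 0 ∪ prevUnion (fun j : Fin (n+1) => C j.succ) i = prevUnion C i.succ := by
  ext e
  simp only [Finset.mem_union, prevUnion, Finset.mem_biUnion, Finset.mem_filter,
    Finset.mem_univ, true_and]
  constructor
  · rintro (h | ⟨j, hj, h⟩)
    · exact ⟨0, i.succ_pos, h⟩
    · exact ⟨j.succ, Fin.succ_lt_succ_iff.mpr hj, h⟩
  · rintro ⟨j, hj, h⟩
    rcases Fin.eq_zero_or_eq_succ j with rfl | ⟨j', rfl⟩
    · exact Or.inl h
    · exact Or.inr ⟨j', Fin.succ_lt_succ_iff.mp hj, h⟩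

end PrevUnion

set_option maxHeartbeats 2000000 in
theorem aux {V : Type*} [Fintype V] [DecidableEq V] :
    ∀ (n : ℕ) (G : SimpleGraph V) (w : Sym2 V → ℝ), (∀ e ∈ G.edgeSet, 0 < w e) →
    ∀ (k : ℕ) (S : Finset (Sym2 V)), IsSplit G S k →
    ∀ (a b : Fin (n+1) → ℕ), (∀ i, 1 ≤ a i) → ((∑ i, a i) < k) →
    ∀ (C : Fin (n+1) → Finset (Sym2 V)),
    (∀ i, IsMinSplit (G.deleteEdges ↑(prevUnion C i)) w (C i) (a i + 1)) →
    (∀ i, IsSplit (G.deleteEdges ↑(prevUnion C i)) (S \ prevUnion C i) (b i)) →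
    ∀ (δ : ℝ), 0 ≤ δ →
    (∀ i, weight w (C i) / (a i : ℝ) ≤ (1 + δ) * weight w (S \ prevUnion C i) / (b i : ℝ)) →
    (∀ i : Fin (n+1), (i : ℕ) + 1 < n + 1 → IsSparse (G.deleteEdges ↑(prevUnion C i)) w (C i) (a i + 1)) →
    IsSplit G (Finset.univ.biUnion C) (1 + ∑ i, a i) ∧
      density w (Finset.univ.biUnion C) (1 + ∑ i, a i) ≤ (1 + δ) * weight w S / (k : ℝ) := by
  intro n
  induction n with
  | zero =>
    intro G w hw k S hS a b ha hak C hmin hSi δ hδ hdens hsparse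
    have hGe : G.deleteEdges ↑(∅ : Finset (Sym2 V)) = G := by simp
    have hp0 : prevUnion C 0 = ∅ := prevUnion_zero C
    have hmin0 := hmin 0
    rw [hp0, hGe] at hmin0
    have hSi0 := hSi 0
    rw [hp0, hGe, Finset.sdiff_empty] at hSi0
    have hdens0 := hdens 0
    rw [hp0, Finset.sdiff_empty] at hdens0
    have hsum : (∑ i, a i) = a 0 := Fin.sum_univ_one a
    have hBU : Finset.univ.biUnion C = C 0 := by
      ext e
      simp only [Finset.mem_biUnion, Finset.mem_univ, true_and]
      constructor
      · rintro ⟨i, hi⟩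
        rcases Fin.eq_zero_or_eq_succ i with rfl | ⟨j, rfl⟩
        · exact hi
        · exact j.elim0
      · intro h; exact ⟨0, h⟩
    have hk2 : 2 ≤ k := by
      have := ha 0; omega
    have hb0 : b 0 = k := by
      have e1 := hSi0.2
      have e2 := hS.2
      omega
    rw [hb0] at hdens0
    constructor
    · constructor
      · rw [hBU]; exact hmin0.1.1
      · rw [hBU]
        have h2 := hmin0.1.2
        omega
    · have hc : ((1 + ∑ i, a i : ℕ) : ℝ) - 1 = (a 0 : ℝ) := by
        rw [hsum]; push_cast; ring
      unfold density
      rw [hBU, hc]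
      exact hdens0
  | succ n ih =>
    intro G w hw k S hS a b ha hak C hmin hSi δ hδ hdens hsparse
    -- basic zero-index facts
    have hGe : G.deleteEdges ↑(∅ : Finset (Sym2 V)) = G := by simp
    have hp0 : prevUnion C 0 = ∅ := prevUnion_zero C
    have hmin0 := hmin 0
    rw [hp0, hGe] at hmin0
    have hSi0 := hSi 0
    rw [hp0, hGe, Finset.sdiff_empty] at hSi0
    have hdens0 := hdens 0
    rw [hp0, Finset.sdiff_empty] at hdens0
    have hsparse0 := hsparse 0 (by simp only [Fin.val_zero]; omega)
    rw [hp0, hGe] at hsparse0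
    have hC0E : ↑(C 0) ⊆ G.edgeSet := hmin0.1.1
    have hSE : ↑S ⊆ G.edgeSet := hS.1
    -- sums
    have hsum : (∑ i, a i) = a 0 + ∑ i : Fin (n+1), a i.succ := Fin.sum_univ_succ a
    have hrest1 : n + 1 ≤ ∑ i : Fin (n+1), a i.succ := by
      calc n + 1 = ∑ _i : Fin (n+1), 1 := by simp
        _ ≤ ∑ i : Fin (n+1), a i.succ := Finset.sum_le_sum (fun i _ => ha i.succ)
    have hk2 : 2 ≤ k := by have := ha 0; omega
    have hb0 : b 0 = k := by
      have e1 := hSi0.2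
      have e2 := hS.2
      omega
    rw [hb0] at hdens0
    -- rewrite lemmas for the sub-instance
    have hPU : ∀ i : Fin (n+1), C 0 ∪ prevUnion (fun j : Fin (n+1) => C j.succ) i = prevUnion C i.succ :=
      prevUnion_succ_eq C
    have hGU : ∀ i : Fin (n+1),
        (G.deleteEdges ↑(C 0)).deleteEdges ↑(prevUnion (fun j : Fin (n+1) => C j.succ) i)
          = G.deleteEdges ↑(prevUnion C i.succ) := by
      intro i
      rw [SimpleGraph.deleteEdges_deleteEdges, ← Finset.coe_union, hPU i]
    have hSU : ∀ i : Fin (n+1),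
        (S \ C 0) \ prevUnion (fun j : Fin (n+1) => C j.succ) i = S \ prevUnion C i.succ := by
      intro i
      rw [show (S \ C 0) \ prevUnion (fun j : Fin (n+1) => C j.succ) i
          = S \ (C 0 ∪ prevUnion (fun j : Fin (n+1) => C j.succ) i) from by
        ext x; simp only [Finset.mem_sdiff, Finset.mem_union]; tauto, hPU i]
    have hPU0 : prevUnion C ((0 : Fin (n+1)).succ) = C 0 := by
      rw [← hPU 0, prevUnion_zero (fun j : Fin (n+1) => C j.succ), Finset.union_empty]
    -- component bookkeeping
    have hnG1 : numComp (G.deleteEdges ↑(C 0)) = a 0 + numComp G := by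
      have := hmin0.1.2
      omega
    have hG1S1 : (G.deleteEdges ↑(C 0)).deleteEdges ↑(S \ C 0)
        = G.deleteEdges ↑(S ∪ C 0) := by
      have huni : C 0 ∪ (S \ C 0) = S ∪ C 0 := by
        ext x; simp only [Finset.mem_union, Finset.mem_sdiff]; tauto
      rw [SimpleGraph.deleteEdges_deleteEdges, ← Finset.coe_union, huni]
    have hSsub : (↑S : Set (Sym2 V)) ⊆ ↑(S ∪ C 0) := by
      rw [Finset.coe_union]; exact Set.subset_union_left
    have hmono1 : numComp (G.deleteEdges ↑S) ≤ numComp (G.deleteEdges ↑(S ∪ C 0)) :=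
      numComp_le_of_le (SimpleGraph.deleteEdges_anti hSsub)
    obtain ⟨cN, hcN⟩ : ∃ cN, numComp (G.deleteEdges ↑(S ∪ C 0))
        = numComp (G.deleteEdges ↑S) + cN := ⟨_, (Nat.add_sub_cancel' hmono1).symm⟩
    -- the degree of S1 in G1
    have hSi1 := hSi ((0 : Fin (n+1)).succ)
    rw [hPU0] at hSi1
    have hS1split : IsSplit (G.deleteEdges ↑(C 0)) (S \ C 0) (b ((0 : Fin (n+1)).succ)) :=
      hSi1
    have hnum1 : numComp (G.deleteEdges ↑(S ∪ C 0))
        = (b ((0 : Fin (n+1)).succ) - 1) + numComp (G.deleteEdges ↑(C 0)) := by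
      rw [← hG1S1]; exact hS1split.2
    have hkey : b ((0 : Fin (n+1)).succ) + a 0 = k + cN ∧ 2 ≤ b ((0 : Fin (n+1)).succ) := by
      have e2 := hS.2
      rw [hcN, e2, hnG1] at hnum1
      omega
    have hb'eq : b ((0 : Fin (n+1)).succ) + a 0 = k + cN := hkey.1
    -- sub-instance hypotheses
    have hw1 : ∀ e ∈ (G.deleteEdges ↑(C 0)).edgeSet, 0 < w e := by
      intro e he
      rw [SimpleGraph.edgeSet_deleteEdges] at he
      exact hw e he.1
    have hak' : (∑ i : Fin (n+1), a i.succ) < b ((0 : Fin (n+1)).succ) := by omega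
    have hmin' : ∀ i : Fin (n+1),
        IsMinSplit ((G.deleteEdges ↑(C 0)).deleteEdges
          ↑(prevUnion (fun j : Fin (n+1) => C j.succ) i)) w (C i.succ) (a i.succ + 1) := by
      intro i
      rw [hGU i]
      exact hmin i.succ
    have hSi' : ∀ i : Fin (n+1),
        IsSplit ((G.deleteEdges ↑(C 0)).deleteEdges ↑(prevUnion (fun j : Fin (n+1) => C j.succ) i))
          ((S \ C 0) \ prevUnion (fun j : Fin (n+1) => C j.succ) i) (b i.succ) := by
      intro i
      rw [hGU i, hSU i]
      exact hSi i.succ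
    have hdens' : ∀ i : Fin (n+1), weight w (C i.succ) / (a i.succ : ℝ)
        ≤ (1 + δ) * weight w ((S \ C 0) \ prevUnion (fun j : Fin (n+1) => C j.succ) i) / (b i.succ : ℝ) := by
      intro i
      rw [hSU i]
      exact hdens i.succ
    have hsparse' : ∀ i : Fin (n+1), (i : ℕ) + 1 < n + 1 →
        IsSparse ((G.deleteEdges ↑(C 0)).deleteEdges
          ↑(prevUnion (fun j : Fin (n+1) => C j.succ) i)) w (C i.succ) (a i.succ + 1) := by
      intro i hi
      rw [hGU i]
      exact hsparse i.succ (by simp only [Fin.val_succ]; omega)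
    have IH := ih (G.deleteEdges ↑(C 0)) w hw1 (b ((0 : Fin (n+1)).succ)) (S \ C 0)
      hS1split (fun i => a i.succ) (fun i => b i.succ) (fun i => ha i.succ) hak'
      (fun j : Fin (n+1) => C j.succ) hmin' hSi' δ hδ hdens' hsparse'
    -- union decomposition
    have hBU : Finset.univ.biUnion C = C 0 ∪ Finset.univ.biUnion (fun j : Fin (n+1) => C j.succ) := by
      ext e
      simp only [Finset.mem_biUnion, Finset.mem_univ, true_and, Finset.mem_union]
      constructor
      · rintro ⟨i, hi⟩
        rcases Fin.eq_zero_or_eq_succ i with rfl | ⟨j, rfl⟩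
        · exact Or.inl hi
        · exact Or.inr ⟨j, hi⟩
      · rintro (h | ⟨j, hj⟩)
        · exact ⟨0, h⟩
        · exact ⟨j.succ, hj⟩
    have hdisj : Disjoint (C 0) (Finset.univ.biUnion (fun j : Fin (n+1) => C j.succ)) := by
      rw [Finset.disjoint_left]
      intro e he hbu
      rw [Finset.mem_biUnion] at hbu
      obtain ⟨j, _, hj⟩ := hbu
      have hsub := (hmin j.succ).1.1
      have hmem : e ∈ (G.deleteEdges ↑(prevUnion C j.succ)).edgeSet := hsub hj
      rw [SimpleGraph.edgeSet_deleteEdges] at hmem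
      apply hmem.2
      have hsub0 : C 0 ⊆ prevUnion C j.succ := by
        apply Finset.subset_biUnion_of_mem C
        simp only [Finset.mem_filter, Finset.mem_univ, true_and]
        exact j.succ_pos
      exact_mod_cast hsub0 he
    -- split part
    have hEdges : ↑(Finset.univ.biUnion C) ⊆ G.edgeSet := by
      intro e he
      have he' : e ∈ Finset.univ.biUnion C := by exact_mod_cast he
      obtain ⟨i, -, hi⟩ := Finset.mem_biUnion.1 he'
      have h2 := (hmin i).1.1 (Finset.mem_coe.2 hi)
      rw [SimpleGraph.edgeSet_deleteEdges] at h2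
      exact h2.1
    have hsplitEq : G.deleteEdges ↑(Finset.univ.biUnion C)
        = (G.deleteEdges ↑(C 0)).deleteEdges ↑(Finset.univ.biUnion (fun j : Fin (n+1) => C j.succ)) := by
      rw [SimpleGraph.deleteEdges_deleteEdges, ← Finset.coe_union, ← hBU]
    have hIHsplit := IH.1.2
    have hsplit : IsSplit G (Finset.univ.biUnion C) (1 + ∑ i, a i) := by
      refine ⟨hEdges, ?_⟩
      rw [hsplitEq]
      rw [hnG1] at hIHsplit
      have e3 : (∑ i : Fin (n+1), (fun i : Fin (n+1) => a i.succ) i)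
          = ∑ i : Fin (n+1), a i.succ := rfl
      omega
    refine ⟨hsplit, ?_⟩
    -- density part
    have hwS : ∀ e ∈ S, 0 ≤ w e := fun e he => (hw e (hSE he)).le
    have hWsplit : weight w S = weight w (S ∩ C 0) + weight w (S \ C 0) :=
      (Finset.sum_inter_add_sum_sdiff S (C 0) w).symm
    have hr0 : 0 ≤ weight w (S ∩ C 0) :=
      Finset.sum_nonneg (fun e he => hwS e (Finset.mem_inter.1 he).1)
    have hW10 : 0 ≤ weight w (S \ C 0) :=
      Finset.sum_nonneg (fun e he => hwS e (Finset.mem_sdiff.1 he).1)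
    have hX00 : 0 ≤ weight w (C 0) :=
      Finset.sum_nonneg (fun e he => (hw e (hC0E he)).le)
    have hwtot : weight w (Finset.univ.biUnion C)
        = weight w (C 0) + weight w (Finset.univ.biUnion (fun j : Fin (n+1) => C j.succ)) := by
      rw [hBU]
      exact Finset.sum_union hdisj
    -- real casts
    have hα1 : (1:ℝ) ≤ (a 0 : ℝ) := by exact_mod_cast ha 0
    have hαpos : (0:ℝ) < (a 0 : ℝ) := by linarith
    have hm1 : (1:ℝ) ≤ ((∑ i : Fin (n+1), a i.succ : ℕ) : ℝ) := by
      exact_mod_cast Nat.le_trans (by omega) hrest1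
    have hγ0 : (0:ℝ) ≤ (cN : ℝ) := by positivity
    have hKge : (a 0 : ℝ) + ((∑ i : Fin (n+1), a i.succ : ℕ) : ℝ) + 1 ≤ (k : ℝ) := by
      have h9 : a 0 + (∑ i : Fin (n+1), a i.succ) + 1 ≤ k := by omega
      exact_mod_cast h9
    have hb'cast : ((b ((0 : Fin (n+1)).succ) : ℕ) : ℝ)
        = (k : ℝ) - (a 0 : ℝ) + (cN : ℝ) := by
      have h9 : ((b ((0 : Fin (n+1)).succ) : ℕ) : ℝ) + (a 0 : ℝ) = (k : ℝ) + (cN : ℝ) := by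
        exact_mod_cast hb'eq
      linarith
    -- X0 bound from hdens0
    have hX0a : weight w (C 0) ≤ (1 + δ) * weight w S / (k : ℝ) * (a 0 : ℝ) := by
      rw [div_le_iff₀ hαpos] at hdens0
      exact hdens0
    -- Xr bound from IH
    have hmpos : (0:ℝ) < ((∑ i : Fin (n+1), a i.succ : ℕ) : ℝ) := by linarith
    have hXr : weight w (Finset.univ.biUnion (fun j : Fin (n+1) => C j.succ))
        ≤ (1 + δ) * ((∑ i : Fin (n+1), a i.succ : ℕ) : ℝ)
          * (weight w S - weight w (S ∩ C 0))
          / ((k : ℝ) - (a 0 : ℝ) + (cN : ℝ)) := by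
      have hIH2 := IH.2
      unfold density at hIH2
      have hcast : ((1 + ∑ i : Fin (n+1), a i.succ : ℕ) : ℝ) - 1
          = ((∑ i : Fin (n+1), a i.succ : ℕ) : ℝ) := by
        push_cast
        ring
      rw [hcast, div_le_iff₀ hmpos] at hIH2
      have hW1r : weight w (S \ C 0) = weight w S - weight w (S ∩ C 0) := by linarith
      calc weight w (Finset.univ.biUnion (fun j : Fin (n+1) => C j.succ))
          ≤ (1 + δ) * weight w (S \ C 0) / ((b ((0 : Fin (n+1)).succ) : ℕ) : ℝ)
            * ((∑ i : Fin (n+1), a i.succ : ℕ) : ℝ) := hIH2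
        _ = (1 + δ) * ((∑ i : Fin (n+1), a i.succ : ℕ) : ℝ)
            * (weight w S - weight w (S ∩ C 0))
            / ((k : ℝ) - (a 0 : ℝ) + (cN : ℝ)) := by
            rw [hW1r, hb'cast]; ring
    -- sparsity bound
    have hX0b : (k : ℝ) * weight w (S ∩ C 0)
        < ((a 0 : ℝ) - (cN : ℝ)) * weight w S →
        weight w (C 0) * ((a 0 : ℝ) - (cN : ℝ)) ≤ (a 0 : ℝ) * weight w (S ∩ C 0) := by
      intro hc
      have hWr0 : 0 ≤ weight w S := Finset.sum_nonneg hwS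
      have hKpos : (0:ℝ) < (k : ℝ) := by linarith
      have hag : (0:ℝ) < (a 0 : ℝ) - (cN : ℝ) := by
        by_contra hcon
        push_neg at hcon
        nlinarith
      have hcNa : cN < a 0 := by
        have h9 : (cN : ℝ) < (a 0 : ℝ) := by linarith
        exact_mod_cast h9
      have hmonoR : numComp G ≤ numComp (G.deleteEdges ↑(S ∩ C 0)) :=
        numComp_le_of_le (SimpleGraph.deleteEdges_le _)
      obtain ⟨d, hd⟩ : ∃ d, numComp (G.deleteEdges ↑(S ∩ C 0)) = numComp G + d :=
        ⟨_, (Nat.add_sub_cancel' hmonoR).symm⟩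
      have hdleA : d ≤ a 0 := by
        have h1 : numComp (G.deleteEdges ↑(S ∩ C 0)) ≤ numComp (G.deleteEdges ↑(C 0)) :=
          numComp_le_of_le (SimpleGraph.deleteEdges_anti
            (Finset.coe_subset.2 Finset.inter_subset_right))
        omega
      have hswap : numComp (G.deleteEdges ↑(C 0)) + numComp (G.deleteEdges ↑S)
          ≤ numComp (G.deleteEdges ↑(S ∪ C 0)) + numComp (G.deleteEdges ↑(S ∩ C 0)) := by
        have hle : G.deleteEdges ↑S ≤ G.deleteEdges ↑(S ∩ C 0) :=
          SimpleGraph.deleteEdges_anti (Finset.coe_subset.2 Finset.inter_subset_left)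
        have hF : ↑(C 0 \ S) ⊆ (G.deleteEdges ↑S).edgeSet := by
          intro e he
          rw [Finset.coe_sdiff] at he
          rw [SimpleGraph.edgeSet_deleteEdges]
          exact ⟨hC0E he.1, he.2⟩
        have hM := numComp_deleteEdges_swap hle (C 0 \ S) hF
        have hu1 : (S ∩ C 0) ∪ (C 0 \ S) = C 0 := by
          ext x
          simp only [Finset.mem_union, Finset.mem_inter, Finset.mem_sdiff]
          tauto
        have hu2 : S ∪ (C 0 \ S) = S ∪ C 0 := by
          ext x
          simp only [Finset.mem_union, Finset.mem_sdiff]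
          tauto
        have hrw1 : (G.deleteEdges (↑(S ∩ C 0) : Set (Sym2 V))).deleteEdges ↑(C 0 \ S)
            = G.deleteEdges ↑(C 0) := by
          rw [SimpleGraph.deleteEdges_deleteEdges, ← Finset.coe_union, hu1]
        have hrw2 : (G.deleteEdges (↑S : Set (Sym2 V))).deleteEdges ↑(C 0 \ S)
            = G.deleteEdges ↑(S ∪ C 0) := by
          rw [SimpleGraph.deleteEdges_deleteEdges, ← Finset.coe_union, hu2]
        rw [hrw1, hrw2] at hM
        omega
      have hdge : a 0 ≤ cN + d := by
        have h2 := hmin0.1.2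
        have e2 := hS.2
        omega
      have hd1 : 1 ≤ d := by omega
      have hRsplit : IsSplit G (S ∩ C 0) (d + 1) := by
        refine ⟨fun e he => hSE ?_, ?_⟩
        · have : e ∈ S ∩ C 0 := by exact_mod_cast he
          exact_mod_cast Finset.inter_subset_left this
        · omega
      have hspR := hsparse0 (d + 1) (by omega) (by omega) (S ∩ C 0) hRsplit
      unfold density at hspR
      have hc1 : ((a 0 + 1 : ℕ) : ℝ) - 1 = (a 0 : ℝ) := by push_cast; ring
      have hc2 : ((d + 1 : ℕ) : ℝ) - 1 = (d : ℝ) := by push_cast; ring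
      rw [hc1, hc2] at hspR
      have hdpos : (0:ℝ) < (d : ℝ) := by exact_mod_cast hd1
      rw [div_le_div_iff₀ hαpos hdpos] at hspR
      have hdae : (a 0 : ℝ) - (cN : ℝ) ≤ (d : ℝ) := by
        have h9 : (a 0 : ℝ) ≤ (cN : ℝ) + (d : ℝ) := by exact_mod_cast hdge
        linarith
      calc weight w (C 0) * ((a 0 : ℝ) - (cN : ℝ))
          ≤ weight w (C 0) * (d : ℝ) := mul_le_mul_of_nonneg_left hdae hX00
        _ ≤ weight w (S ∩ C 0) * (a 0 : ℝ) := hspR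
        _ = (a 0 : ℝ) * weight w (S ∩ C 0) := by ring
    -- final arithmetic
    have hWr : weight w (S ∩ C 0) ≤ weight w S := by linarith
    have hfinal := key_ineq (1 + δ) (a 0 : ℝ) ((∑ i : Fin (n+1), a i.succ : ℕ) : ℝ)
      (k : ℝ) (cN : ℝ) (weight w (S ∩ C 0)) (weight w S) (weight w (C 0))
      (weight w (Finset.univ.biUnion (fun j : Fin (n+1) => C j.succ)))
      (by linarith) hα1 hm1 hγ0 hKge hr0 hWr hX0a hX0b hXr
    have hcastden : ((1 + ∑ i, a i : ℕ) : ℝ)  - 1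
        = (a 0 : ℝ) + ((∑ i : Fin (n+1), a i.succ : ℕ) : ℝ) := by
      rw [hsum]
      push_cast
      ring
    unfold density
    rw [hcastden, hwtot, div_le_iff₀ (by linarith : (0:ℝ) < (a 0 : ℝ)
      + ((∑ i : Fin (n+1), a i.succ : ℕ) : ℝ))]
    calc weight w (C 0) + weight w (Finset.univ.biUnion (fun j : Fin (n+1) => C j.succ))
        ≤ (1 + δ) * ((a 0 : ℝ) + ((∑ i : Fin (n+1), a i.succ : ℕ) : ℝ))
          * weight w S / (k : ℝ) := hfinal
      _ = (1 + δ) * weight w S / (k : ℝ)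
          * ((a 0 : ℝ) + ((∑ i : Fin (n+1), a i.succ : ℕ) : ℝ)) := by ring

theorem union_of_greedy_splits
    {V : Type*} [Fintype V] [DecidableEq V]
    (G : SimpleGraph V)
    (w : Sym2 V → ℝ) (hw : ∀ e ∈ G.edgeSet, 0 < w e)
    (k l : ℕ) (hl : 1 ≤ l)
    (S : Finset (Sym2 V)) (hS : IsSplit G S k)
    (a b : Fin l → ℕ) (ha : ∀ i, 1 ≤ a i) (hak : ∑ i, a i < k)
    (C : Fin l → Finset (Sym2 V))
    (hmin : ∀ i : Fin l,
      IsMinSplit (G.deleteEdges ↑(prevUnion C i)) w (C i) (a i + 1))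
    (hSi : ∀ i : Fin l,
      IsSplit (G.deleteEdges ↑(prevUnion C i)) (S \ prevUnion C i) (b i))
    (δ : ℝ) (hδ : 0 ≤ δ)
    (hdens : ∀ i : Fin l,
      weight w (C i) / (a i : ℝ) ≤ (1 + δ) * weight w (S \ prevUnion C i) / (b i : ℝ))
    (hsparse : ∀ i : Fin l, (i : ℕ) + 1 < l →
      IsSparse (G.deleteEdges ↑(prevUnion C i)) w (C i) (a i + 1)) :
    IsSplit G (Finset.univ.biUnion C) (1 + ∑ i, a i) ∧
      density w (Finset.univ.biUnion C) (1 + ∑ i, a i) ≤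
        (1 + δ) * weight w S / (k : ℝ) := by
  obtain ⟨n, rfl⟩ : ∃ n, l = n + 1 := ⟨l - 1, by omega⟩
  exact aux n G w hw k S hS a b ha hak C hmin hSi δ hδ hdens hsparse

end KCut
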